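/- Let G be a bipartite graph with bipartition V(G) = U ∪ W where U = {x_1,...,x_t}. Then (J(G)^k : x_1 x_2 ⋯ x_t) = J(G)^{k-1} for every k ≥ 1, where J(G) is the cover ideal of G. -/

import Mathlib

open MvPolynomial

/-- The cover ideal `J(G) = ⋂_{{x_u,x_v} ∈ E(G)} (x_u, x_v)`. -/
noncomputable def coverIdeal (K : Type*) [Field K] {n : ℕ} (G : SimpleGraph (Fin n)) :
    Ideal (MvPolynomial (Fin n) K) :=
  ⨅ (u : Fin n) (v : Fin n) (_ : G.Adj u v), Ideal.span {X u, X v}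

namespace Stmt18Aux

variable {n : ℕ}

/-- `C` is a vertex cover of `G`. -/
def IsCov (G : SimpleGraph (Fin n)) (C : Finset (Fin n)) : Prop :=
  ∀ a b, G.Adj a b → a ∈ C ∨ b ∈ C

/-- The indicator exponent vector of a finset of vertices. -/
noncomputable def ind (C : Finset (Fin n)) : Fin n →₀ ℕ :=
  ∑ v ∈ C, Finsupp.single v 1

lemma ind_apply (C : Finset (Fin n)) (v : Fin n) :
    ind C v = if v ∈ C then 1 else 0 := by
  classical
  simp only [ind, Finsupp.finset_sum_apply, Finsupp.single_apply]
  rw [Finset.sum_ite_eq' C v fun _ => 1]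

lemma monomial_ind_eq_prod (K : Type*) [Field K] (C : Finset (Fin n)) :
    (monomial (ind C) (1 : K)) = ∏ v ∈ C, X v := by
  classical
  induction C using Finset.induction with
  | empty => simp [ind]
  | insert _ _ h ih =>
    rw [Finset.prod_insert h, ← ih,
      show ∀ a : Fin n, (X a : MvPolynomial (Fin n) K) = monomial (Finsupp.single a 1) 1
        from fun _ => rfl, monomial_mul, one_mul]
    congr 1
    simp only [ind]
    rw [Finset.sum_insert h]

lemma listsum_apply (L : List (Finset (Fin n))) (v : Fin n) :
    ((L.map ind).sum) v = (L.map (fun C => ind C v)).sum := by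
  induction L with
  | nil => simp
  | cons C rest ih => simp [Finsupp.add_apply, ih]

/-- Exponent vectors of the natural generators of `J(G)^m`. -/
def genSet (G : SimpleGraph (Fin n)) (m : ℕ) : Set (Fin n →₀ ℕ) :=
  { s | ∃ L : List (Finset (Fin n)), L.length = m ∧ (∀ C ∈ L, IsCov G C) ∧
      (L.map ind).sum = s }

lemma monomial_mem_span_pair {K : Type*} [Field K] {a b : Fin n} {C : Finset (Fin n)}
    (h : a ∈ C) :
    (monomial (ind C) (1 : K)) ∈ Ideal.span {(X a : MvPolynomial (Fin n) K), X b} := by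
  have hdvd : (X a : MvPolynomial (Fin n) K) ∣ monomial (ind C) 1 := by
    rw [show (X a : MvPolynomial (Fin n) K) = monomial (Finsupp.single a 1) 1 from rfl,
      monomial_dvd_monomial]
    refine ⟨Or.inr ?_, dvd_refl _⟩
    rw [Finsupp.le_def]
    intro i
    rw [Finsupp.single_apply, ind_apply]
    split
    · next hai => subst hai; simp [h]
    · exact Nat.zero_le _
  obtain ⟨q, hq⟩ := hdvd
  rw [hq]
  exact Ideal.mul_mem_right q _ (Ideal.subset_span (by simp))

lemma coverIdeal_eq (K : Type*) [Field K] (G : SimpleGraph (Fin n)) :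
    coverIdeal K G = Ideal.span ((fun s => monomial s (1 : K)) '' genSet G 1) := by
  classical
  apply le_antisymm
  · intro f hf
    rw [mem_ideal_span_monomial_image]
    intro μ hμ
    refine ⟨ind μ.support, ⟨[μ.support], rfl, ?_, by simp⟩, ?_⟩
    · intro C hC
      rw [List.mem_singleton] at hC
      subst hC
      intro a b hab
      have h2 : f ∈ Ideal.span (X '' {a, b} : Set (MvPolynomial (Fin n) K)) := by
        rw [Set.image_insert_eq, Set.image_singleton]
        simp only [coverIdeal, Ideal.mem_iInf] at hf
        exact hf a b hab
      rw [mem_ideal_span_X_image] at h2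
      obtain ⟨i, hi, hne⟩ := h2 μ hμ
      rcases hi with rfl | rfl
      · exact Or.inl (Finsupp.mem_support_iff.2 hne)
      · exact Or.inr (Finsupp.mem_support_iff.2 hne)
    · rw [Finsupp.le_def]
      intro i
      rw [ind_apply]
      split
      · next hi => exact Nat.one_le_iff_ne_zero.2 (Finsupp.mem_support_iff.1 hi)
      · exact Nat.zero_le _
  · rw [Ideal.span_le]
    rintro _ ⟨s, ⟨L, hL1, hL2, rfl⟩, rfl⟩
    rcases L with _ | ⟨C, L⟩
    · simp at hL1
    · rcases L with _ | ⟨C', L⟩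
      · have hC : IsCov G C := hL2 C (by simp)
        simp only [List.map_cons, List.map_nil, List.sum_cons, List.sum_nil, add_zero]
        simp only [coverIdeal, SetLike.mem_coe, Ideal.mem_iInf]
        intro a b hab
        rcases hC a b hab with h | h
        · exact monomial_mem_span_pair h
        · rw [show ({(X a : MvPolynomial (Fin n) K), X b} : Set _) = {X b, X a} by
            ext; simp [or_comm]]
          exact monomial_mem_span_pair h
      · simp at hL1

lemma coverIdeal_pow_eq (K : Type*) [Field K] (G : SimpleGraph (Fin n)) (m : ℕ) :
    (coverIdeal K G) ^ m = Ideal.span ((fun s => monomial s (1 : K)) '' genSet G m) := by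
  classical
  induction m with
  | zero =>
    rw [pow_zero, Ideal.one_eq_top, eq_comm, Ideal.eq_top_iff_one]
    have h0 : (0 : Fin n →₀ ℕ) ∈ genSet G 0 := ⟨[], rfl, by simp, by simp⟩
    have := Ideal.subset_span (Set.mem_image_of_mem (fun s => monomial s (1 : K)) h0)
    simpa using this
  | succ m ih =>
    rw [pow_succ, ih, coverIdeal_eq K G, Ideal.span_mul_span']
    congr 1
    ext p
    simp only [Set.mem_mul, Set.mem_image]
    constructor
    · rintro ⟨x, ⟨t, ⟨L, hL1, hL2, rfl⟩, rfl⟩, y, ⟨u, ⟨L', hL'1, hL'2, rfl⟩, rfl⟩, rfl⟩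
      refine ⟨(L.map ind).sum + (L'.map ind).sum,
        ⟨L ++ L', by simp [hL1, hL'1], ?_, by simp⟩, by rw [monomial_mul, one_mul]⟩
      intro D hD
      rcases List.mem_append.1 hD with h | h
      exacts [hL2 D h, hL'2 D h]
    · rintro ⟨s, ⟨L, hL1, hL2, rfl⟩, rfl⟩
      rcases L with _ | ⟨C0, L⟩
      · simp at hL1
      · refine ⟨monomial ((L.map ind).sum) 1,
          ⟨(L.map ind).sum, ⟨L, by simpa using hL1, fun D hD => hL2 D (by simp [hD]), rfl⟩, rfl⟩,
          monomial (ind C0) 1,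
          ⟨ind C0, ⟨[C0], rfl, ?_, by simp⟩, rfl⟩, ?_⟩
        · intro D hD
          rw [List.mem_singleton] at hD
          subst hD
          exact hL2 D (by simp)
        · rw [monomial_mul, one_mul]
          congr 1
          simp [add_comm]

lemma rearrange (G : SimpleGraph (Fin n)) (c : Fin n → Bool)
    (hbip : ∀ u v, G.Adj u v → c u ≠ c v) :
    ∀ (L : List (Finset (Fin n))) (C0 : Finset (Fin n)), IsCov G C0 →
      (∀ C ∈ L, IsCov G C) →
      ∃ (A : Finset (Fin n)) (L' : List (Finset (Fin n))), IsCov G A ∧ (∀ C ∈ L', IsCov G C) ∧ L'.length = L.length ∧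
        ind A + (L'.map ind).sum = ind C0 + (L.map ind).sum ∧
        (∀ v, c v = true → (∃ C ∈ L', v ∈ C) → v ∈ A) := by
  classical
  intro L
  induction L with
  | nil =>
    intro C0 h0 _
    refine ⟨C0, [], h0, ?_, rfl, rfl, ?_⟩
    · intro C hC; simp at hC
    · rintro v - ⟨C, hC, -⟩; simp at hC
  | cons C1 rest ih =>
    intro C0 h0 hall
    obtain ⟨A', L'', hA', hL'', hlen, hsum, hmem⟩ :=
      ih C1 (hall C1 (by simp)) (fun C hC => hall C (by simp [hC]))
    set A : Finset (Fin n) :=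
      Finset.univ.filter (fun v => if c v = true then v ∈ C0 ∨ v ∈ A' else v ∈ C0 ∧ v ∈ A')
      with hAdef
    set B : Finset (Fin n) :=
      Finset.univ.filter (fun v => if c v = true then v ∈ C0 ∧ v ∈ A' else v ∈ C0 ∨ v ∈ A')
      with hBdef
    have memA : ∀ v, v ∈ A ↔ (if c v = true then v ∈ C0 ∨ v ∈ A' else v ∈ C0 ∧ v ∈ A') := by
      intro v; simp [hAdef]
    have memB : ∀ v, v ∈ B ↔ (if c v = true then v ∈ C0 ∧ v ∈ A' else v ∈ C0 ∨ v ∈ A') := by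
      intro v; simp [hBdef]
    have covA : IsCov G A := by
      intro a b hab
      have hcab := hbip a b hab
      rw [memA a, memA b]
      by_cases hca : c a = true
      · have hcb : ¬ c b = true := fun h => hcab (hca.trans h.symm)
        rw [if_pos hca, if_neg hcb]
        rcases h0 a b hab with h | h <;> rcases hA' a b hab with h2 | h2 <;> tauto
      · have hcb : c b = true := by
          cases hcb' : c b
          · cases hca' : c a
            · exact absurd (hca'.trans hcb'.symm) hcab
            · exact absurd hca' hca
          · rfl
        rw [if_neg hca, if_pos hcb]
        rcases h0 a b hab with h | h <;> rcases hA' a b hab with h2 | h2 <;> tauto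
    have covB : IsCov G B := by
      intro a b hab
      have hcab := hbip a b hab
      rw [memB a, memB b]
      by_cases hca : c a = true
      · have hcb : ¬ c b = true := fun h => hcab (hca.trans h.symm)
        rw [if_pos hca, if_neg hcb]
        rcases h0 a b hab with h | h <;> rcases hA' a b hab with h2 | h2 <;> tauto
      · have hcb : c b = true := by
          cases hcb' : c b
          · cases hca' : c a
            · exact absurd (hca'.trans hcb'.symm) hcab
            · exact absurd hca' hca
          · rfl
        rw [if_neg hca, if_pos hcb]
        rcases h0 a b hab with h | h <;> rcases hA' a b hab with h2 | h2 <;> tauto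
    have hAB : ∀ v, ind A v + ind B v = ind C0 v + ind A' v := by
      intro v
      by_cases hc : c v = true <;> by_cases h1 : v ∈ C0 <;> by_cases h2 : v ∈ A' <;>
        simp [ind_apply, memA v, memB v, hc, h1, h2]
    refine ⟨A, B :: L'', covA, ?_, by simp [hlen], ?_, ?_⟩
    · intro C hC
      rcases List.mem_cons.1 hC with rfl | h
      · exact covB
      · exact hL'' C h
    · ext v
      have h1 := DFunLike.congr_fun hsum v
      simp only [List.map_cons, List.sum_cons, Finsupp.add_apply] at h1 ⊢
      have h2 := hAB v
      omega
    · intro v hv hex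
      obtain ⟨C, hC, hvC⟩ := hex
      rcases List.mem_cons.1 hC with rfl | h
      · rw [memB v, if_pos hv] at hvC
        rw [memA v, if_pos hv]
        exact Or.inl hvC.1
      · have : v ∈ A' := hmem v hv ⟨C, h, hvC⟩
        rw [memA v, if_pos hv]
        exact Or.inr this

lemma shrink (G : SimpleGraph (Fin n)) (c : Fin n → Bool)
    (hbip : ∀ u v, G.Adj u v → c u ≠ c v)
    (μ : Fin n →₀ ℕ) (C0 : Finset (Fin n)) (L : List (Finset (Fin n)))
    (h0 : IsCov G C0) (hall : ∀ C ∈ L, IsCov G C)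
    (hle : ind C0 + (L.map ind).sum ≤ μ + ind (Finset.univ.filter (fun v => c v = true))) :
    ∃ L' : List (Finset (Fin n)), L'.length = L.length ∧ (∀ C ∈ L', IsCov G C) ∧ (L'.map ind).sum ≤ μ := by
  classical
  obtain ⟨A, L', hA, hL', hlen, hsum, hmem⟩ := rearrange G c hbip L C0 h0 hall
  refine ⟨L', hlen, hL', ?_⟩
  rw [Finsupp.le_def]
  intro v
  have h1 := DFunLike.congr_fun hsum v
  have h2 := Finsupp.le_def.1 hle v
  simp only [Finsupp.add_apply] at h1 h2
  by_cases hc : c v = true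
  · have hU : ind (Finset.univ.filter (fun v => c v = true)) v = 1 := by
      simp [ind_apply, hc]
    rw [hU] at h2
    by_cases hz : (L'.map ind).sum v = 0
    · omega
    · have hex : ∃ C ∈ L', v ∈ C := by
        by_contra hno
        push_neg at hno
        apply hz
        rw [listsum_apply]
        apply List.sum_eq_zero
        intro x hx
        rw [List.mem_map] at hx
        obtain ⟨C, hC, rfl⟩ := hx
        simp [ind_apply, hno C hC]
      have hvA : v ∈ A := hmem v hc hex
      have : ind A v = 1 := by simp [ind_apply, hvA]
      omega
  · have hU : ind (Finset.univ.filter (fun v => c v = true)) v = 0 := by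
      simp [ind_apply, hc]
    omega

end Stmt18Aux

open Stmt18Aux

open scoped Classical in
/-- Let `G` be bipartite with bipartition `U ∪ W` (given by a 2-coloring `c`, with
`U` the vertices colored `true`).  Then `(J(G)^k : ∏_{x ∈ U} x) = J(G)^{k-1}` for
every `k ≥ 1`. -/
theorem stmt18 {n : ℕ} (K : Type*) [Field K] (G : SimpleGraph (Fin n))
    (c : Fin n → Bool) (hbip : ∀ u v, G.Adj u v → c u ≠ c v)
    (k : ℕ) (hk : 1 ≤ k) :
    ((coverIdeal K G) ^ k).colon
        (Ideal.span {∏ v ∈ Finset.univ.filter (fun v => c v = true),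
          (X v : MvPolynomial (Fin n) K)})
      = (coverIdeal K G) ^ (k - 1) := by
  classical
  obtain ⟨m, rfl⟩ : ∃ m, k = m + 1 := ⟨k - 1, (Nat.succ_pred_eq_of_pos hk).symm⟩
  simp only [Nat.add_sub_cancel]
  set U : Finset (Fin n) := Finset.univ.filter (fun v => c v = true) with hUdef
  have hprod : (∏ v ∈ U, (X v : MvPolynomial (Fin n) K)) = monomial (ind U) 1 :=
    (monomial_ind_eq_prod K U).symm
  apply le_antisymm
  · intro f hf
    rw [Ideal.mem_colon_span_singleton, hprod] at hf
    rw [coverIdeal_pow_eq K G (m + 1), mem_ideal_span_monomial_image] at hf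
    rw [coverIdeal_pow_eq K G m, mem_ideal_span_monomial_image]
    intro μ hμ
    have hμU : μ + ind U ∈ (f * monomial (ind U) (1 : K)).support := by
      rw [mem_support_iff, coeff_mul_monomial, mul_one]
      exact mem_support_iff.1 hμ
    obtain ⟨s, ⟨L, hL1, hL2, rfl⟩, hsle⟩ := hf _ hμU
    rcases L with _ | ⟨C0, L⟩
    · simp at hL1
    · have hle2 : ind C0 + (L.map ind).sum ≤ μ + ind U := by
        simpa using hsle
      obtain ⟨L', hlen, hL', hsum⟩ :=
        shrink G c hbip μ C0 L (hL2 C0 (by simp)) (fun C hC => hL2 C (by simp [hC])) hle2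
      refine ⟨(L'.map ind).sum, ⟨L', ?_, hL', rfl⟩, hsum⟩
      rw [hlen]
      simpa using hL1
  · intro f hf
    rw [Ideal.mem_colon_span_singleton, hprod]
    have hUcov : IsCov G U := by
      intro a b hab
      have hcab := hbip a b hab
      cases h : c a
      · have hb : c b = true := by
          cases h' : c b
          · exact absurd (h.trans h'.symm) hcab
          · rfl
        exact Or.inr (by simp [hUdef, hb])
      · exact Or.inl (by simp [hUdef, h])
    have huJ : monomial (ind U) (1 : K) ∈ coverIdeal K G := by
      simp only [coverIdeal, Ideal.mem_iInf]
      intro a b hab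
      rcases hUcov a b hab with h | h
      · exact monomial_mem_span_pair h
      · rw [show ({(X a : MvPolynomial (Fin n) K), X b} : Set _) = {X b, X a} by
          ext; simp [or_comm]]
        exact monomial_mem_span_pair h
    have hmem : f * monomial (ind U) (1 : K) ∈ (coverIdeal K G) ^ m * coverIdeal K G :=
      Ideal.mul_mem_mul hf huJ
    rwa [← pow_succ] at hmem
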